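/- arXiv:2502.05545 — 2 statements merged into one kernel-verified Lean document; each statement's English description precedes it below -/
import Mathlib

section
/- The function H is strictly increasing on [0, ∞); that is, for all real numbers 0 ≤ z < z', one has H(z) < H(z'). -/
noncomputable section

/-- The error function `erf x = (2/√π) ∫₀ˣ exp(−s²) ds`. -/
def erf (x : ℝ) : ℝ := (2 / Real.sqrt Real.pi) * ∫ s in (0:ℝ)..x, Real.exp (-(s^2))

/-- The complementary error function. -/
def erfc (x : ℝ) : ℝ := 1 - erf x

/-- Physical data of the three-phase Stefan problem: positive thermal conductivities,
specific heats, mass density, latent heats, and temperatures `B > C > D`. -/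
structure Params where
  k₁ : ℝ
  k₂ : ℝ
  k₃ : ℝ
  c₁ : ℝ
  c₂ : ℝ
  c₃ : ℝ
  ρ : ℝ
  ℓ₁ : ℝ
  ℓ₂ : ℝ
  B : ℝ
  C : ℝ
  D : ℝ
  hk₁ : 0 < k₁
  hk₂ : 0 < k₂
  hk₃ : 0 < k₃
  hc₁ : 0 < c₁
  hc₂ : 0 < c₂
  hc₃ : 0 < c₃
  hρ : 0 < ρ
  hℓ₁ : 0 < ℓ₁
  hℓ₂ : 0 < ℓ₂
  hBC : C < B
  hCD : D < C

namespace Params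

/-- Thermal diffusivity of phase 1. -/
def α₁ (p : Params) : ℝ := p.k₁ / (p.ρ * p.c₁)

/-- Thermal diffusivity of phase 2. -/
def α₂ (p : Params) : ℝ := p.k₂ / (p.ρ * p.c₂)

/-- Thermal diffusivity of phase 3. -/
def α₃ (p : Params) : ℝ := p.k₃ / (p.ρ * p.c₃)

/-- Stefan number `Ste₁ = c₁(C−D)/ℓ₁`. -/
def Ste₁ (p : Params) : ℝ := p.c₁ * (p.C - p.D) / p.ℓ₁

/-- Stefan number `Ste₂ = c₂(B−C)/ℓ₂`. -/
def Ste₂ (p : Params) : ℝ := p.c₂ * (p.B - p.C) / p.ℓ₂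

/-- `φ(z) = z + (Ste₁/√π) exp(−z²)/erfc(z)`. -/
def φ (p : Params) (z : ℝ) : ℝ :=
  z + (p.Ste₁ / Real.sqrt Real.pi) * Real.exp (-(z^2)) / erfc z

/-- `H(z) = erf(z√(α₁/α₂)) − (Ste₂/√π)(ℓ₂/ℓ₁)√(k₂c₁/(k₁c₂)) exp(−z²α₁/α₂)/φ(z)`. -/
def H (p : Params) (z : ℝ) : ℝ :=
  erf (z * Real.sqrt (p.α₁ / p.α₂)) -
    (p.Ste₂ / Real.sqrt Real.pi) * (p.ℓ₂ / p.ℓ₁) *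
      Real.sqrt (p.k₂ * p.c₁ / (p.k₁ * p.c₂)) *
      (Real.exp (-(z^2) * (p.α₁ / p.α₂)) / p.φ z)

/-- `Q(z) = (ℓ₁/ℓ₂) φ(z) exp(z² α₁/α₂)`. -/
def Q (p : Params) (z : ℝ) : ℝ :=
  (p.ℓ₁ / p.ℓ₂) * p.φ z * Real.exp (z^2 * (p.α₁ / p.α₂))

/-- The function `T` arising from the Robin (convective) boundary condition with
heat-transfer coefficient `h₀` and bulk temperature `Ainf`. -/
def T (p : Params) (h₀ Ainf : ℝ) (z : ℝ) : ℝ :=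
  (p.Ste₂ / (Real.sqrt Real.pi * p.c₂)) * ((Ainf - p.B) / (p.B - p.C)) *
    Real.sqrt (p.k₃ * p.c₁ * p.c₃ / p.k₁) *
    (Real.exp (-(z^2) * p.α₁ * (1 / p.α₃ - 1 / p.α₂)) /
      (p.k₃ / (h₀ * Real.sqrt (Real.pi * p.α₃)) + erf (z * Real.sqrt (p.α₁ / p.α₃)))) -
  z * Real.exp (z^2 * (p.α₁ / p.α₂))

/-- The function `V` arising from the Dirichlet boundary condition with temperature `A`. -/
def V (p : Params) (A : ℝ) (z : ℝ) : ℝ :=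
  ((A - p.B) / p.ℓ₂) * Real.sqrt (p.c₁ * p.c₃ * p.k₃ / (Real.pi * p.k₁)) *
    (Real.exp (-(z^2) * (p.α₁ / p.α₃ - p.α₁ / p.α₂)) / erf (z * Real.sqrt (p.α₁ / p.α₃))) -
  z * Real.exp (z^2 * (p.α₁ / p.α₂))

/-- The function `P` arising from the Neumann boundary condition with flux coefficient `q₀`. -/
def P (p : Params) (q₀ : ℝ) (z : ℝ) : ℝ :=
  Real.exp (z^2 * (p.α₁ / p.α₂)) *
    (-z + (q₀ / p.ℓ₂) * Real.sqrt (p.c₁ / (p.ρ * p.k₁)) * Real.exp (-(z^2) * (p.α₁ / p.α₃)))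

/-- Critical heat-transfer coefficient `h₂`. -/
def h2 (p : Params) (Ainf z₀ : ℝ) : ℝ :=
  ((p.B - p.C) / (Ainf - p.B)) *
    Real.sqrt (p.k₂ * p.k₃ * p.c₂ / (Real.pi * p.c₃ * p.α₃)) *
    (1 / erf (z₀ * Real.sqrt (p.α₁ / p.α₂)))

/-- Critical heat-flux coefficient `q₂`. -/
def q2 (p : Params) (z₀ : ℝ) : ℝ :=
  p.k₂ * (p.B - p.C) / (Real.sqrt (p.α₂ * Real.pi) * erf (z₀ * Real.sqrt (p.α₁ / p.α₂)))

end Params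


open MeasureTheory Set

lemma erf_hasDerivAt (x : ℝ) :
    HasDerivAt erf ((2 / Real.sqrt Real.pi) * Real.exp (-(x^2))) x := by
  have hc : Continuous fun s : ℝ => Real.exp (-(s^2)) := by continuity
  have h := (intervalIntegral.integral_hasDerivAt_right
    (hc.intervalIntegrable 0 x) (hc.stronglyMeasurableAtFilter _ _) hc.continuousAt)
  exact h.const_mul _

lemma erfc_hasDerivAt (x : ℝ) :
    HasDerivAt erfc (-((2 / Real.sqrt Real.pi) * Real.exp (-(x^2)))) x :=
  ((erf_hasDerivAt x).const_sub 1)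

lemma erf_strictMono : StrictMono erf := by
  apply strictMono_of_deriv_pos
  intro x
  rw [(erf_hasDerivAt x).deriv]
  positivity

lemma sqrt_pi_pos : 0 < Real.sqrt Real.pi := Real.sqrt_pos.mpr Real.pi_pos

lemma erfc_eq_integral {z : ℝ} (hz : 0 ≤ z) :
    erfc z = (2 / Real.sqrt Real.pi) * ∫ s in Ioi z, Real.exp (-(s^2)) := by
  have hgauss : ∫ s in Ioi (0:ℝ), Real.exp (-(s^2)) = Real.sqrt Real.pi / 2 := by
    have := integral_gaussian_Ioi 1
    simpa using this
  have hint : Integrable (fun s : ℝ => Real.exp (-(s^2))) := by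
    simpa using integrable_exp_neg_mul_sq (one_pos)
  have hsplit : (∫ s in Ioc 0 z, Real.exp (-(s^2))) + ∫ s in Ioi z, Real.exp (-(s^2))
      = ∫ s in Ioi (0:ℝ), Real.exp (-(s^2)) := by
    rw [← setIntegral_union (Set.Ioc_disjoint_Ioi le_rfl) measurableSet_Ioi
      hint.integrableOn hint.integrableOn, Set.Ioc_union_Ioi_eq_Ioi hz]
  have h0z : (∫ s in (0:ℝ)..z, Real.exp (-(s^2))) = ∫ s in Ioc 0 z, Real.exp (-(s^2)) :=
    intervalIntegral.integral_of_le hz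
  have hsqrt : (2 / Real.sqrt Real.pi) * (Real.sqrt Real.pi / 2) = 1 := by
    field_simp
  rw [erfc, erf, h0z]
  have : (∫ s in Ioi z, Real.exp (-(s^2)))
      = Real.sqrt Real.pi / 2 - ∫ s in Ioc 0 z, Real.exp (-(s^2)) := by
    rw [← hgauss, ← hsplit]; ring
  rw [this]
  field_simp

lemma integral_Ioi_pos {z : ℝ} :
    0 < ∫ s in Ioi z, Real.exp (-(s^2)) := by
  have hint : Integrable (fun s : ℝ => Real.exp (-(s^2))) := by
    simpa using integrable_exp_neg_mul_sq (one_pos)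
  apply setIntegral_pos_iff_support_of_nonneg_ae ?_ hint.integrableOn |>.mpr
  · have : (Function.support fun s : ℝ => Real.exp (-(s^2))) = Set.univ := by
      ext s; simp [Function.support, Real.exp_ne_zero]
    rw [this]
    simpa using measure_Ioi_pos (volume : Measure ℝ) z
  · filter_upwards with s using (Real.exp_pos _).le

lemma erfc_pos {z : ℝ} (hz : 0 ≤ z) : 0 < erfc z := by
  rw [erfc_eq_integral hz]
  have := @integral_Ioi_pos z
  positivity

lemma integral_self_exp {z : ℝ} (hz : 0 < z) :
    ∫ s in Ioi z, s * Real.exp (-(s^2)) = Real.exp (-(z^2)) / 2 := by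
  have hderiv : ∀ x ∈ Ici z, HasDerivAt (fun s => -Real.exp (-(s^2)) / 2)
      (x * Real.exp (-(x^2))) x := by
    intro x _
    have h1 : HasDerivAt (fun s : ℝ => -(s^2)) (-(2*x)) x := by
      exact (by simpa using (hasDerivAt_pow 2 x) : HasDerivAt (fun s : ℝ => s^2) (2*x) x).neg
    have h2 := (h1.exp).neg.div_const 2
    exact h2.congr_deriv (by ring)
  have hnonneg : ∀ x ∈ Ioi z, 0 ≤ x * Real.exp (-(x^2)) := by
    intro x hx
    have : 0 < x := lt_trans hz hx
    positivity
  have htend : Filter.Tendsto (fun s => -Real.exp (-(s^2)) / 2) Filter.atTop (nhds 0) := by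
    have h1 : Filter.Tendsto (fun s : ℝ => -(s^2)) Filter.atTop Filter.atBot := by
      apply Filter.tendsto_neg_atBot_iff.mpr
      exact Filter.tendsto_pow_atTop (two_ne_zero)
    have := (Real.tendsto_exp_atBot.comp h1).neg.div_const 2
    simpa using this
  have := integral_Ioi_of_hasDerivAt_of_nonneg' hderiv hnonneg htend
  rw [this]
  simp
  ring

lemma integrableOn_self_exp {z : ℝ} (hz : 0 < z) :
    IntegrableOn (fun s => s * Real.exp (-(s^2))) (Ioi z) := by
  have hderiv : ∀ x ∈ Ici z, HasDerivAt (fun s => -Real.exp (-(s^2)) / 2)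
      (x * Real.exp (-(x^2))) x := by
    intro x _
    have h1 : HasDerivAt (fun s : ℝ => -(s^2)) (-(2*x)) x := by
      exact (by simpa using (hasDerivAt_pow 2 x) : HasDerivAt (fun s : ℝ => s^2) (2*x) x).neg
    have h2 := (h1.exp).neg.div_const 2
    exact h2.congr_deriv (by ring)
  have hnonneg : ∀ x ∈ Ioi z, 0 ≤ x * Real.exp (-(x^2)) := by
    intro x hx
    have : 0 < x := lt_trans hz hx
    positivity
  have htend : Filter.Tendsto (fun s => -Real.exp (-(s^2)) / 2) Filter.atTop (nhds 0) := by
    have h1 : Filter.Tendsto (fun s : ℝ => -(s^2)) Filter.atTop Filter.atBot := by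
      apply Filter.tendsto_neg_atBot_iff.mpr
      exact Filter.tendsto_pow_atTop (two_ne_zero)
    have := (Real.tendsto_exp_atBot.comp h1).neg.div_const 2
    simpa using this
  exact integrableOn_Ioi_deriv_of_nonneg' hderiv hnonneg htend

lemma mills {z : ℝ} (hz : 0 < z) :
    z * erfc z ≤ Real.exp (-(z^2)) / Real.sqrt Real.pi := by
  have key : (∫ s in Ioi z, Real.exp (-(s^2))) ≤ Real.exp (-(z^2)) / (2 * z) := by
    have hint : Integrable (fun s : ℝ => Real.exp (-(s^2))) := by
      simpa using integrable_exp_neg_mul_sq (one_pos)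
    have hmono : (∫ s in Ioi z, Real.exp (-(s^2)))
        ≤ ∫ s in Ioi z, (s / z) * Real.exp (-(s^2)) := by
      apply setIntegral_mono_on hint.integrableOn
      · have heqf : (fun s : ℝ => (s / z) * Real.exp (-(s^2)))
            = fun s => (1/z) * (s * Real.exp (-(s^2))) := by funext s; ring
        rw [heqf]
        exact (integrableOn_self_exp hz).const_mul _
      · exact measurableSet_Ioi
      · intro s hs
        have hs' : z < s := hs
        have h1 : (1:ℝ) ≤ s / z := (one_le_div hz).mpr hs'.le
        nlinarith [Real.exp_pos (-(s^2)), mul_le_mul_of_nonneg_right h1 (Real.exp_pos (-(s^2))).le]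
    have heq : (∫ s in Ioi z, (s / z) * Real.exp (-(s^2)))
        = Real.exp (-(z^2)) / (2 * z) := by
      have : (∫ s in Ioi z, (s / z) * Real.exp (-(s^2)))
          = (1/z) * ∫ s in Ioi z, s * Real.exp (-(s^2)) := by
        rw [← integral_const_mul]
        congr 1 with s
        ring
      rw [this, integral_self_exp hz]
      field_simp
    linarith
  rw [erfc_eq_integral hz.le]
  calc z * ((2 / Real.sqrt Real.pi) * ∫ s in Ioi z, Real.exp (-(s^2)))
      ≤ z * ((2 / Real.sqrt Real.pi) * (Real.exp (-(z^2)) / (2 * z))) := by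
        apply mul_le_mul_of_nonneg_left _ hz.le
        apply mul_le_mul_of_nonneg_left key
        positivity
    _ = Real.exp (-(z^2)) / Real.sqrt Real.pi := by
        field_simp

def Mfun (z : ℝ) : ℝ := Real.exp (-(z^2)) / erfc z


lemma Mfun_hasDerivAt {x : ℝ} (hx : erfc x ≠ 0) :
    HasDerivAt Mfun
      (((-(2*x) * Real.exp (-(x^2))) * erfc x -
        Real.exp (-(x^2)) * (-((2 / Real.sqrt Real.pi) * Real.exp (-(x^2))))) / (erfc x)^2) x := by
  have h1 : HasDerivAt (fun s : ℝ => -(s^2)) (-(2*x)) x := by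
    exact (by simpa using (hasDerivAt_pow 2 x) : HasDerivAt (fun s : ℝ => s^2) (2*x) x).neg
  have h2 : HasDerivAt (fun s : ℝ => Real.exp (-(s^2))) (Real.exp (-(x^2)) * (-(2*x))) x :=
    h1.exp
  have := h2.div (erfc_hasDerivAt x) hx
  exact this.congr_deriv (by ring)

lemma Mfun_monotoneOn : MonotoneOn Mfun (Ici 0) := by
  have herfc_cont : Continuous erfc := by
    have : Differentiable ℝ erfc := fun x => (erfc_hasDerivAt x).differentiableAt
    exact this.continuous
  apply monotoneOn_of_deriv_nonneg (convex_Ici 0)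
  · apply ContinuousOn.div
    · exact (by continuity : Continuous fun s : ℝ => Real.exp (-(s^2))).continuousOn
    · exact herfc_cont.continuousOn
    · exact fun x hx => (erfc_pos hx).ne'
  · intro x hx
    rw [interior_Ici] at hx
    exact (Mfun_hasDerivAt (erfc_pos (le_of_lt hx)).ne').differentiableAt.differentiableWithinAt
  · intro x hx
    rw [interior_Ici] at hx
    rw [(Mfun_hasDerivAt (erfc_pos hx.le).ne').deriv]
    have hm := mills hx
    have he := (Real.exp_pos (-(x^2))).le
    apply div_nonneg _ (sq_nonneg _)
    have hsp : (0:ℝ) < Real.sqrt Real.pi := Real.sqrt_pos.mpr Real.pi_pos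
    have key := mul_le_mul_of_nonneg_right hm he
    set e := Real.exp (-(x^2)) with hedef
    have hring : -(2*x) * e * erfc x - e * (-(2 / Real.sqrt Real.pi * e))
        = 2*((e / Real.sqrt Real.pi)*e - x*erfc x*e) := by ring
    rw [hring]
    linarith [key]

lemma Mfun_pos {z : ℝ} (hz : 0 ≤ z) : 0 < Mfun z :=
  div_pos (Real.exp_pos _) (erfc_pos hz)


lemma phi_pos (p : Params) {z : ℝ} (hz : 0 ≤ z) : 0 < p.φ z := by
  have hSte : 0 < p.Ste₁ := div_pos (mul_pos p.hc₁ (sub_pos.mpr p.hCD)) p.hℓ₁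
  have hM := Mfun_pos hz
  have hsp : (0:ℝ) < Real.sqrt Real.pi := Real.sqrt_pos.mpr Real.pi_pos
  have : p.φ z = z + (p.Ste₁ / Real.sqrt Real.pi) * Mfun z := by
    rw [Params.φ, Mfun, mul_div_assoc]
  rw [this]
  have : 0 < (p.Ste₁ / Real.sqrt Real.pi) * Mfun z := by positivity
  linarith

lemma phi_mono (p : Params) {z z' : ℝ} (hz : 0 ≤ z) (hz' : 0 ≤ z') (hle : z ≤ z') :
    p.φ z ≤ p.φ z' := by
  have hSte : 0 < p.Ste₁ := div_pos (mul_pos p.hc₁ (sub_pos.mpr p.hCD)) p.hℓ₁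
  have hsp : (0:ℝ) < Real.sqrt Real.pi := Real.sqrt_pos.mpr Real.pi_pos
  have hM := Mfun_monotoneOn hz hz' hle
  have e1 : p.φ z = z + (p.Ste₁ / Real.sqrt Real.pi) * Mfun z := by
    rw [Params.φ, Mfun, mul_div_assoc]
  have e2 : p.φ z' = z' + (p.Ste₁ / Real.sqrt Real.pi) * Mfun z' := by
    rw [Params.φ, Mfun, mul_div_assoc]
  rw [e1, e2]
  have : (p.Ste₁ / Real.sqrt Real.pi) * Mfun z ≤ (p.Ste₁ / Real.sqrt Real.pi) * Mfun z' := by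
    apply mul_le_mul_of_nonneg_left hM (by positivity)
  linarith

/-- `H` is strictly increasing on `[0, ∞)`. -/
theorem H_strictMono (p : Params) :
    ∀ z z' : ℝ, 0 ≤ z → z < z' → p.H z < p.H z' := by
  intro z z' hz hlt
  have hz' : 0 ≤ z' := le_trans hz hlt.le
  have ha : 0 < p.α₁ / p.α₂ := by
    have h1 : 0 < p.α₁ := div_pos p.hk₁ (mul_pos p.hρ p.hc₁)
    have h2 : 0 < p.α₂ := div_pos p.hk₂ (mul_pos p.hρ p.hc₂)
    exact div_pos h1 h2
  have hSte2 : 0 < p.Ste₂ := div_pos (mul_pos p.hc₂ (sub_pos.mpr p.hBC)) p.hℓ₂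
  have hsp : (0:ℝ) < Real.sqrt Real.pi := Real.sqrt_pos.mpr Real.pi_pos
  have hc : 0 < (p.Ste₂ / Real.sqrt Real.pi) * (p.ℓ₂ / p.ℓ₁) *
      Real.sqrt (p.k₂ * p.c₁ / (p.k₁ * p.c₂)) := by
    have h1 : 0 < p.k₂ * p.c₁ / (p.k₁ * p.c₂) :=
      div_pos (mul_pos p.hk₂ p.hc₁) (mul_pos p.hk₁ p.hc₂)
    have h2 : 0 < Real.sqrt (p.k₂ * p.c₁ / (p.k₁ * p.c₂)) := Real.sqrt_pos.mpr h1
    have h3 : 0 < p.ℓ₂ / p.ℓ₁ := div_pos p.hℓ₂ p.hℓ₁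
    positivity
  -- erf part
  have herf : erf (z * Real.sqrt (p.α₁ / p.α₂)) < erf (z' * Real.sqrt (p.α₁ / p.α₂)) :=
    erf_strictMono (mul_lt_mul_of_pos_right hlt (Real.sqrt_pos.mpr ha))
  -- quotient part
  have hexp : Real.exp (-(z'^2) * (p.α₁ / p.α₂)) < Real.exp (-(z^2) * (p.α₁ / p.α₂)) := by
    apply Real.exp_lt_exp.mpr
    have hsq : z^2 < z'^2 := by nlinarith
    nlinarith
  have hphz : 0 < p.φ z := phi_pos p hz
  have hphz' : 0 < p.φ z' := phi_pos p hz'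
  have hphle : p.φ z ≤ p.φ z' := phi_mono p hz hz' hlt.le
  have hquot : Real.exp (-(z'^2) * (p.α₁ / p.α₂)) / p.φ z'
      < Real.exp (-(z^2) * (p.α₁ / p.α₂)) / p.φ z := by
    calc Real.exp (-(z'^2) * (p.α₁ / p.α₂)) / p.φ z'
        < Real.exp (-(z^2) * (p.α₁ / p.α₂)) / p.φ z' := by
          exact (div_lt_div_iff_of_pos_right hphz').mpr hexp
      _ ≤ Real.exp (-(z^2) * (p.α₁ / p.α₂)) / p.φ z := by
          apply div_le_div_of_nonneg_left (Real.exp_pos _).le hphz hphle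
  have hmul := mul_lt_mul_of_pos_left hquot hc
  rw [Params.H, Params.H]
  linarith
end
end

section
/- Assume A∞ > B and h₀ > 0. Then the inequality (A∞−B)·√(c₁·c₃·α₃/(k₁·k₃))·h₀ > ℓ₁·φ(z₀)·exp(z₀²·α₁/α₂) holds if and only if h₀ > h₂, where h₂ := ((B−C)/(A∞−B))·√(k₂·k₃·c₂/(π·c₃·α₃))·(1/erf(z₀·√(α₁/α₂))). -/
noncomputable section

lemma erf_pos {x : ℝ} (hx : 0 < x) : 0 < erf x := by
  unfold erf
  apply mul_pos
  · have := Real.pi_pos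
    positivity
  · apply intervalIntegral.intervalIntegral_pos_of_pos (f := fun s => Real.exp (-(s^2)))
    · exact (Real.continuous_exp.comp (by continuity)).intervalIntegrable _ _
    · intro x; exact Real.exp_pos _
    · exact hx

/-- for `A∞ > B`, `h₀ > 0`, the inequality
`(A∞−B)√(c₁c₃α₃/(k₁k₃)) h₀ > ℓ₁ φ(z₀) exp(z₀² α₁/α₂)` holds iff `h₀ > h₂`. -/
theorem ineq_iff_h0_gt_h2 (p : Params) (h₀ Ainf z₀ : ℝ)
    (hAinf : p.B < Ainf) (hh₀ : 0 < h₀)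
    (hz₀ : 0 < z₀ ∧ p.H z₀ = 0) :
    ((Ainf - p.B) * Real.sqrt (p.c₁ * p.c₃ * p.α₃ / (p.k₁ * p.k₃)) * h₀ >
        p.ℓ₁ * p.φ z₀ * Real.exp (z₀^2 * (p.α₁ / p.α₂))) ↔
      h₀ > p.h2 Ainf z₀ := by
  obtain ⟨hz, hH⟩ := hz₀
  have hπ := Real.pi_pos
  have hα₁ : 0 < p.α₁ := div_pos p.hk₁ (mul_pos p.hρ p.hc₁)
  have hα₂ : 0 < p.α₂ := div_pos p.hk₂ (mul_pos p.hρ p.hc₂)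
  have hα₃ : 0 < p.α₃ := div_pos p.hk₃ (mul_pos p.hρ p.hc₃)
  have hk₁ := p.hk₁; have hk₂ := p.hk₂; have hk₃ := p.hk₃
  have hc₁ := p.hc₁; have hc₂ := p.hc₂; have hc₃ := p.hc₃
  have hℓ₁ := p.hℓ₁; have hℓ₂ := p.hℓ₂
  have hBC := p.hBC
  have hAB : (0:ℝ) < Ainf - p.B := sub_pos.2 hAinf
  have hSte : p.Ste₂ = p.c₂ * (p.B - p.C) / p.ℓ₂ := rfl
  have hSte₂ : 0 < p.Ste₂ := by
    rw [hSte]; exact div_pos (mul_pos p.hc₂ (sub_pos.2 p.hBC)) p.hℓ₂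
  unfold Params.H at hH
  rw [sub_eq_zero] at hH
  unfold Params.h2
  set E := Real.exp (z₀ ^ 2 * (p.α₁ / p.α₂)) with hE
  have hEpos : 0 < E := Real.exp_pos _
  have hEneg : Real.exp (-(z₀ ^ 2) * (p.α₁ / p.α₂)) = E⁻¹ := by
    rw [hE, ← Real.exp_neg]; ring_nf
  rw [hEneg] at hH
  set sqπ := Real.sqrt Real.pi with hsqπ
  have hsqπ0 : 0 < sqπ := Real.sqrt_pos.2 hπ
  set sqY := Real.sqrt (p.k₂ * p.c₁ / (p.k₁ * p.c₂)) with hsqY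
  have hsqY0 : 0 < sqY := Real.sqrt_pos.2 (by positivity)
  set sqX := Real.sqrt (p.k₂ * p.k₃ * p.c₂ / (Real.pi * p.c₃ * p.α₃)) with hsqX
  have hsqX0 : 0 < sqX := Real.sqrt_pos.2 (by positivity)
  set S := Real.sqrt (p.c₁ * p.c₃ * p.α₃ / (p.k₁ * p.k₃)) with hS
  have hSpos : 0 < S := Real.sqrt_pos.2 (by positivity)
  set a := z₀ * Real.sqrt (p.α₁ / p.α₂) with ha
  have hapos : 0 < a := mul_pos hz (Real.sqrt_pos.2 (by positivity))
  have herfa : 0 < erf a := erf_pos hapos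
  clear_value E sqπ sqY sqX S a
  -- positivity of φ z₀
  have hφ : 0 < p.φ z₀ := by
    rcases lt_trichotomy (p.φ z₀) 0 with h | h | h
    · exfalso
      have h1 : E⁻¹ / p.φ z₀ < 0 := div_neg_of_pos_of_neg (inv_pos.2 hEpos) h
      have h2 : p.Ste₂ / sqπ * (p.ℓ₂ / p.ℓ₁) * sqY * (E⁻¹ / p.φ z₀) < 0 :=
        mul_neg_of_pos_of_neg (by positivity) h1
      rw [← hH] at h2
      linarith
    · rw [h, div_zero, mul_zero] at hH
      exact absurd hH herfa.ne'
    · exact h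
  have herfE : erf a * p.φ z₀ * E * (p.ℓ₁ * sqπ) = p.c₂ * (p.B - p.C) * sqY := by
    rw [hH, hSte]
    field_simp
  have hsqrt : sqX * S * sqπ = sqY * p.c₂ := by
    rw [hsqX, hS, hsqπ, hsqY, ← Real.sqrt_mul (by positivity), ← Real.sqrt_mul (by positivity),
      show Real.sqrt (p.k₂ * p.c₁ / (p.k₁ * p.c₂)) * p.c₂ =
        Real.sqrt (p.k₂ * p.c₁ / (p.k₁ * p.c₂) * p.c₂ ^ 2) by
          rw [Real.sqrt_mul (by positivity), Real.sqrt_sq p.hc₂.le]]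
    congr 1
    field_simp [hπ.ne', hα₃.ne', hc₃.ne', hk₁.ne', hk₃.ne', hc₂.ne']
  have heq : (p.B - p.C) / (Ainf - p.B) * sqX * (1 / erf a) * ((Ainf - p.B) * S) =
      p.ℓ₁ * p.φ z₀ * E := by
    apply mul_right_cancel₀ (b := erf a * sqπ) (by positivity)
    have expand : (p.B - p.C) / (Ainf - p.B) * sqX * (1 / erf a) * ((Ainf - p.B) * S) *
        (erf a * sqπ) = (p.B - p.C) * (sqX * S * sqπ) := by
      field_simp
    rw [expand, hsqrt]
    linear_combination -herfE
  have hM : 0 < (Ainf - p.B) * S := mul_pos hAB hSpos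
  constructor
  · intro h
    rw [gt_iff_lt, ← heq] at h
    rw [gt_iff_lt]
    have h' : (p.B - p.C) / (Ainf - p.B) * sqX * (1 / erf a) * ((Ainf - p.B) * S) <
        h₀ * ((Ainf - p.B) * S) := by
      calc (p.B - p.C) / (Ainf - p.B) * sqX * (1 / erf a) * ((Ainf - p.B) * S)
          < (Ainf - p.B) * S * h₀ := h
        _ = h₀ * ((Ainf - p.B) * S) := by ring
    exact (mul_lt_mul_iff_of_pos_right hM).1 h'
  · intro h
    rw [gt_iff_lt] at h
    rw [gt_iff_lt, ← heq]
    calc (p.B - p.C) / (Ainf - p.B) * sqX * (1 / erf a) * ((Ainf - p.B) * S)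
        < h₀ * ((Ainf - p.B) * S) := (mul_lt_mul_iff_of_pos_right hM).2 h
      _ = (Ainf - p.B) * S * h₀ := by ring
end
end
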